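/- Suppose the binary relation ≻ on F satisfies Axioms 1–7. Then the derived relations ≻_p and ≻_o are both asymmetric and negatively transitive. -/

import Mathlib

/-!
Framework: Anscombe–Aumann acts, finitely additive probability measures,
simple acts, hope-and-prepare preferences (Bastianello–Hill style setup).
-/

open Set

section Framework

variable (S : Type*) [MeasurableSpace S]

/-- The measurable sets (events) of `S`, as a subtype. -/
abbrev MSet := {A : Set S // MeasurableSet A}

/-- Finitely additive probability measures on `(S, Σ)`, viewed as real-valued
set functions on events.  The weak* topology is the topology of pointwise
convergence on events, i.e. the product topology on `MSet S → ℝ`. -/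
def ProbCharges : Set (MSet S → ℝ) :=
  {p | (∀ A, 0 ≤ p A) ∧ p ⟨Set.univ, MeasurableSet.univ⟩ = 1 ∧
    ∀ A B : MSet S, Disjoint A.1 B.1 → p ⟨A.1 ∪ B.1, A.2.union B.2⟩ = p A + p B}

end Framework

section Fns

variable {S : Type*} [MeasurableSpace S]

/-- `φ : S → ℝ` is a measurable simple function (an element of `B₀(Σ)`). -/
def IsSimpleFn (φ : S → ℝ) : Prop :=
  (Set.range φ).Finite ∧ ∀ y : ℝ, MeasurableSet (φ ⁻¹' {y})

/-- The integral `∫ φ dp` of a simple function `φ` against a finitely additive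
measure `p` (junk value `0` if `φ` is not simple). -/
noncomputable def fInt (p : MSet S → ℝ) (φ : S → ℝ) : ℝ :=
  @dite _ (IsSimpleFn φ) (Classical.dec _)
    (fun h => ∑ y ∈ h.1.toFinset, y * p ⟨φ ⁻¹' {y}, h.2 y⟩) (fun _ => 0)

/-- A functional `I : B₀(Σ) → ℝ` is monotonic. -/
def MonotonicFn (I : (S → ℝ) → ℝ) : Prop :=
  ∀ φ ψ, IsSimpleFn φ → IsSimpleFn ψ → (∀ s, φ s ≤ ψ s) → I φ ≤ I ψ

/-- A functional `I : B₀(Σ) → ℝ` is constant-linear: `I(aφ + b) = a I(φ) + b`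
for `a ≥ 0`, `b ∈ ℝ`. -/
def ConstLinearFn (I : (S → ℝ) → ℝ) : Prop :=
  ∀ φ, IsSimpleFn φ → ∀ a : ℝ, 0 ≤ a → ∀ b : ℝ,
    I (fun s => a * φ s + b) = a * I φ + b

end Fns

section Acts

variable {S : Type*} [MeasurableSpace S] {V : Type*} [AddCommGroup V] [Module ℝ V]

/-- `f : S → V` is a simple act with outcomes in `X`: it is `X`-valued,
takes finitely many values and is `Σ`-measurable. -/
def IsAct (X : Set V) (f : S → V) : Prop :=
  (∀ s, f s ∈ X) ∧ (Set.range f).Finite ∧ ∀ v : V, MeasurableSet (f ⁻¹' {v})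

/-- Pointwise mixture `αf + (1-α)g` of two acts. -/
def mixAct (α : ℝ) (f g : S → V) : S → V := fun s => α • f s + (1 - α) • g s

/-- The constant act with outcome `x`. -/
def constAct (S : Type*) {V : Type*} (x : V) : S → V := fun _ => x

/-- `u : V → ℝ` is affine on the convex set `X`. -/
def IsAffineOn (u : V → ℝ) (X : Set V) : Prop :=
  ∀ x ∈ X, ∀ y ∈ X, ∀ α : ℝ, 0 ≤ α → α ≤ 1 →
    u (α • x + (1 - α) • y) = α * u x + (1 - α) * u y

/-- `u` is non-constant on `X`. -/
def NonConstOn (u : V → ℝ) (X : Set V) : Prop := ∃ x ∈ X, ∃ y ∈ X, u x ≠ u y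

/-- Expected utility `∫ u(f) dp` of the act `f` under the measure `p`. -/
noncomputable def EU (u : V → ℝ) (f : S → V) (p : MSet S → ℝ) : ℝ :=
  fInt p (fun s => u (f s))

/-- Worst-case expected utility of `f` over the set of scenarios `C`. -/
noncomputable def minEU (u : V → ℝ) (C : Set (MSet S → ℝ)) (f : S → V) : ℝ :=
  sInf (EU u f '' C)

/-- Best-case expected utility of `f` over the set of scenarios `D`. -/
noncomputable def maxEU (u : V → ℝ) (D : Set (MSet S → ℝ)) (f : S → V) : ℝ :=
  sSup (EU u f '' D)

/-- `f` and `g` are incomparable (`f ⋈ g`). -/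
def Incomp (R : (S → V) → (S → V) → Prop) (f g : S → V) : Prop := ¬ R f g ∧ ¬ R g f

end Acts

section Axioms

variable {S : Type*} [MeasurableSpace S] {V : Type*} [AddCommGroup V] [Module ℝ V]
variable (X : Set V) (R : (S → V) → (S → V) → Prop)

/-- Axiom 1: `≻` is asymmetric and transitive on acts, and its restriction to
constant acts is non-trivial and negatively transitive. -/
def PrefAx1 : Prop :=
  (∀ f g, IsAct X f → IsAct X g → R f g → ¬ R g f) ∧
  (∀ f g h, IsAct X f → IsAct X g → IsAct X h → R f g → R g h → R f h) ∧
  (∃ x ∈ X, ∃ y ∈ X, R (constAct S x) (constAct S y)) ∧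
  (∀ x ∈ X, ∀ y ∈ X, ∀ z ∈ X, ¬ R (constAct S x) (constAct S y) →
    ¬ R (constAct S y) (constAct S z) → ¬ R (constAct S x) (constAct S z))

/-- Axiom 2 (continuity). -/
def PrefAx2 : Prop :=
  ∀ f g h, IsAct X f → IsAct X g → IsAct X h →
    IsOpen {α : Set.Icc (0 : ℝ) 1 | R (mixAct (α : ℝ) f g) h} ∧
    IsOpen {α : Set.Icc (0 : ℝ) 1 | R h (mixAct (α : ℝ) f g)}

/-- Axiom 3 (certainty independence). -/
def PrefAx3 : Prop :=
  ∀ f g, IsAct X f → IsAct X g → ∀ x ∈ X, ∀ α : ℝ, 0 < α → α < 1 →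
    (R f g ↔ R (mixAct α f (constAct S x)) (mixAct α g (constAct S x)))

/-- Axiom 4: for any outcome `x`, the upper and lower contour sets at the
constant act `x` are convex. -/
def PrefAx4 : Prop :=
  ∀ x ∈ X,
    (∀ f g, IsAct X f → IsAct X g → R f (constAct S x) → R g (constAct S x) →
      ∀ α : ℝ, 0 ≤ α → α ≤ 1 → R (mixAct α f g) (constAct S x)) ∧
    (∀ f g, IsAct X f → IsAct X g → R (constAct S x) f → R (constAct S x) g →
      ∀ α : ℝ, 0 ≤ α → α ≤ 1 → R (constAct S x) (mixAct α f g))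

/-- Axiom 5 (monotonicity). -/
def PrefAx5 : Prop :=
  ∀ f g, IsAct X f → IsAct X g →
    (∀ s : S, R (constAct S (f s)) (constAct S (g s))) → R f g

/-- Axiom 6: if every outcome incomparable to `f` is incomparable to `g`,
then `f` and `g` are incomparable. -/
def PrefAx6 : Prop :=
  ∀ f g, IsAct X f → IsAct X g →
    (∀ x ∈ X, Incomp R f (constAct S x) → Incomp R g (constAct S x)) → Incomp R f g

/-- Axiom 7: if `f ⋈ x`, `x ≻ g`, `g ⋈ y` and `f ≻ y`, then `f ≻ g`. -/
def PrefAx7 : Prop :=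
  ∀ f g, IsAct X f → IsAct X g → ∀ x ∈ X, ∀ y ∈ X,
    Incomp R f (constAct S x) → R (constAct S x) g →
    Incomp R g (constAct S y) → R f (constAct S y) → R f g

end Axioms

section Reps

variable {S : Type*} [MeasurableSpace S] {V : Type*} [AddCommGroup V] [Module ℝ V]

/-- `(u, C, D)` is a hope-and-prepare representation of `R`. -/
def IsHPRep (X : Set V) (R : (S → V) → (S → V) → Prop) (u : V → ℝ)
    (C D : Set (MSet S → ℝ)) : Prop :=
  IsAffineOn u X ∧ NonConstOn u X ∧
  C.Nonempty ∧ D.Nonempty ∧ C ⊆ ProbCharges S ∧ D ⊆ ProbCharges S ∧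
  IsCompact C ∧ IsCompact D ∧ Convex ℝ C ∧ Convex ℝ D ∧ (C ∩ D).Nonempty ∧
  ∀ f g, IsAct X f → IsAct X g →
    (R f g ↔ (minEU u C g < minEU u C f ∧ maxEU u D g < maxEU u D f))

/-- `(u, C)` is a Bewley representation of `R`. -/
def IsBewleyRep (X : Set V) (R : (S → V) → (S → V) → Prop) (u : V → ℝ)
    (C : Set (MSet S → ℝ)) : Prop :=
  IsAffineOn u X ∧ NonConstOn u X ∧
  C.Nonempty ∧ C ⊆ ProbCharges S ∧ IsCompact C ∧ Convex ℝ C ∧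
  ∀ f g, IsAct X f → IsAct X g → (R f g ↔ ∀ p ∈ C, EU u g p < EU u f p)

/-- `(u, C, D)` is a twofold multi-prior representation of `R`. -/
def IsTwofoldRep (X : Set V) (R : (S → V) → (S → V) → Prop) (u : V → ℝ)
    (C D : Set (MSet S → ℝ)) : Prop :=
  IsAffineOn u X ∧ NonConstOn u X ∧
  C.Nonempty ∧ D.Nonempty ∧ C ⊆ ProbCharges S ∧ D ⊆ ProbCharges S ∧
  IsCompact C ∧ IsCompact D ∧ Convex ℝ C ∧ Convex ℝ D ∧ (C ∩ D).Nonempty ∧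
  ∀ f g, IsAct X f → IsAct X g → (R f g ↔ maxEU u D g < minEU u C f)

end Reps

section Statement

variable {S : Type*} [MeasurableSpace S] [Nonempty S]
variable {V : Type*} [AddCommGroup V] [Module ℝ V]

/-- The derived pessimistic relation: `g ≻_p f` iff there is an outcome `x`
with `g ≻ x` and `x ⋈ f`. -/
def PessRel (X : Set V) (R : (S → V) → (S → V) → Prop) (g f : S → V) : Prop :=
  ∃ x ∈ X, R g (constAct S x) ∧ Incomp R (constAct S x) f

/-- The derived optimistic relation: `g ≻_o f` iff there is an outcome `x`
with `x ⋈ g` and `x ≻ f`. -/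
def OptRel (X : Set V) (R : (S → V) → (S → V) → Prop) (g f : S → V) : Prop :=
  ∃ x ∈ X, Incomp R (constAct S x) g ∧ R (constAct S x) f

section Aux

variable {S : Type*} [MeasurableSpace S] {V : Type*} [AddCommGroup V] [Module ℝ V]

lemma constAct_isAct (X : Set V) {x : V} (hx : x ∈ X) : IsAct X (constAct S x) := by
  refine ⟨fun _ => hx, ?_, ?_⟩
  · exact (Set.finite_singleton x).subset (by rintro v ⟨s, rfl⟩; rfl)
  · intro v
    by_cases h : x = v
    · have : (constAct S x) ⁻¹' {v} = Set.univ := by ext s; simp [constAct, h]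
      rw [this]; exact MeasurableSet.univ
    · have : (constAct S x) ⁻¹' {v} = ∅ := by ext s; simp [constAct, h]
      rw [this]; exact MeasurableSet.empty

lemma mixAct_isAct {X : Set V} (hX : Convex ℝ X) {f g : S → V} (hf : IsAct X f)
    (hg : IsAct X g) {α : ℝ} (h0 : 0 ≤ α) (h1 : α ≤ 1) : IsAct X (mixAct α f g) := by
  obtain ⟨hfX, hfr, hfm⟩ := hf
  obtain ⟨hgX, hgr, hgm⟩ := hg
  refine ⟨fun s => hX (hfX s) (hgX s) h0 (by linarith) (by ring), ?_, ?_⟩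
  · have hsub : Set.range (mixAct α f g) ⊆
        (fun p : V × V => α • p.1 + (1-α) • p.2) '' (Set.range f ×ˢ Set.range g) := by
      rintro v ⟨s, rfl⟩
      exact ⟨(f s, g s), ⟨⟨s, rfl⟩, ⟨s, rfl⟩⟩, rfl⟩
    exact ((hfr.prod hgr).image _).subset hsub
  · intro v
    have hkey : mixAct α f g ⁻¹' {v} =
        ⋃ p ∈ {p : V × V | p ∈ Set.range f ×ˢ Set.range g ∧ α • p.1 + (1-α) • p.2 = v},
          f ⁻¹' {p.1} ∩ g ⁻¹' {p.2} := by
      ext s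
      simp only [Set.mem_preimage, Set.mem_singleton_iff, Set.mem_iUnion, Set.mem_inter_iff,
        Set.mem_setOf_eq]
      constructor
      · intro h
        exact ⟨(f s, g s), ⟨⟨⟨s, rfl⟩, ⟨s, rfl⟩⟩, h⟩, rfl, rfl⟩
      · rintro ⟨p, ⟨_, hpv⟩, h1, h2⟩
        show α • f s + (1-α) • g s = v
        rw [h1, h2]; exact hpv
    rw [hkey]
    refine MeasurableSet.biUnion ?_ (fun p _ => (hfm p.1).inter (hgm p.2))
    exact ((hfr.prod hgr).subset (fun p hp => hp.1)).countable

lemma mix_zero (f g : S → V) : mixAct (0:ℝ) f g = g := by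
  funext s; simp [mixAct]

lemma mix_one (f g : S → V) : mixAct (1:ℝ) f g = f := by
  funext s; simp [mixAct]

lemma mix_const (α : ℝ) (u v : V) :
    mixAct α (constAct S u) (constAct S v) = constAct S (α • u + (1-α) • v) := rfl

lemma mix_self (α : ℝ) (u : V) :
    mixAct α (constAct S u) (constAct S u) = constAct S u := by
  funext s
  show α • u + (1-α) • u = u
  rw [← add_smul]; simp

lemma mix_const_flip (t : ℝ) (u v : V) :
    mixAct (1-t) (constAct S u) (constAct S v) = constAct S (t • v + (1-t) • u) := by
  funext s
  show (1-t) • u + (1-(1-t)) • v = t • v + (1-t) • u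
  rw [sub_sub_cancel]; exact add_comm _ _

lemma exists_small {U : Set (Set.Icc (0:ℝ) 1)} (hU : IsOpen U)
    (h0 : (⟨0, by norm_num⟩ : Set.Icc (0:ℝ) 1) ∈ U) :
    ∃ t : Set.Icc (0:ℝ) 1, 0 < (t:ℝ) ∧ (t:ℝ) < 1 ∧ t ∈ U := by
  rw [isOpen_induced_iff] at hU
  obtain ⟨W, hW, hWeq⟩ := hU
  have h0W : (0:ℝ) ∈ W := by
    have : (⟨0, by norm_num⟩ : Set.Icc (0:ℝ) 1) ∈ Subtype.val ⁻¹' W := by rw [hWeq]; exact h0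
    exact this
  obtain ⟨ε, hε, hball⟩ := Metric.isOpen_iff.1 hW 0 h0W
  have ht0 : (0:ℝ) < min (ε/2) (1/2) := by positivity
  have ht1 : min (ε/2) (1/2) < 1 := lt_of_le_of_lt (min_le_right _ _) (by norm_num)
  refine ⟨⟨min (ε/2) (1/2), le_of_lt ht0, le_of_lt ht1⟩, ht0, ht1, ?_⟩
  have : min (ε/2) (1/2) ∈ W := by
    apply hball
    rw [Metric.mem_ball, Real.dist_eq, sub_zero, abs_of_pos ht0]
    exact lt_of_le_of_lt (min_le_left _ _) (by linarith)
  rw [← hWeq]; exact this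

lemma finset_min {α : Type*} (r : α → α → Prop) (s : Finset α) :
    (∀ a ∈ s, ∀ b ∈ s, ∀ c ∈ s, r a b → r b c → r a c) →
    (∀ a ∈ s, ¬ r a a) → s.Nonempty →
    ∃ z ∈ s, ∀ w ∈ s, ¬ r z w := by
  classical
  induction s using Finset.induction_on with
  | empty => intro _ _ h; exact absurd h (by simp)
  | insert p t hp ih =>
  intro htr hirr hs
  rcases t.eq_empty_or_nonempty with rfl | hs'
  · refine ⟨p, by simp, ?_⟩
    intro w hw
    simp only [Finset.mem_insert, Finset.notMem_empty, or_false] at hw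
    subst hw
    exact hirr w (by simp)
  · have hmem : ∀ x ∈ t, x ∈ insert p t := fun x hx => Finset.mem_insert_of_mem hx
    obtain ⟨z, hz, hzmin⟩ := ih
      (fun x hx y hy c hc => htr x (hmem x hx) y (hmem y hy) c (hmem c hc))
      (fun x hx => hirr x (hmem x hx)) hs'
    by_cases hza : r z p
    · refine ⟨p, Finset.mem_insert_self p t, ?_⟩
      intro w hw
      rcases Finset.mem_insert.1 hw with rfl | hw
      · exact hirr w (Finset.mem_insert_self w t)
      · intro hpw
        exact hzmin w hw
          (htr z (hmem z hz) p (Finset.mem_insert_self p t) w (hmem w hw) hza hpw)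
    · refine ⟨z, hmem z hz, ?_⟩
      intro w hw
      rcases Finset.mem_insert.1 hw with rfl | hw
      · exact hza
      · exact hzmin w hw

end Aux

section Key

variable {S : Type*} [MeasurableSpace S] {V : Type*} [AddCommGroup V] [Module ℝ V]
variable {X : Set V} {R : (S → V) → (S → V) → Prop}

lemma M1core (hX : Convex ℝ X) (h1 : PrefAx1 X R) (h2 : PrefAx2 X R) (h3 : PrefAx3 X R)
    (h5 : PrefAx5 X R) {f : S → V} (hf : IsAct X f) {x a : V} (hx : x ∈ X) (ha : a ∈ X)
    (hax : R (constAct S a) (constAct S x))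
    (hpt : ∀ s, ¬ R (constAct S x) (constAct S (f s))) :
    ¬ R (constAct S x) f := by
  intro hxf
  have hopen := (h2 (constAct S a) f (constAct S x) (constAct_isAct X ha) hf
    (constAct_isAct X hx)).2
  have h0mem : (⟨0, by norm_num⟩ : Set.Icc (0:ℝ) 1) ∈
      {α : Set.Icc (0:ℝ) 1 | R (constAct S x) (mixAct (α:ℝ) (constAct S a) f)} := by
    show R (constAct S x) (mixAct ((0:ℝ)) (constAct S a) f)
    rw [mix_zero]; exact hxf
  obtain ⟨t, ht0, ht1, htm⟩ := exists_small hopen h0mem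
  have htm' : R (constAct S x) (mixAct ((t:ℝ)) (constAct S a) f) := htm
  have hwX : (t:ℝ) • a + (1-(t:ℝ)) • x ∈ X := hX ha hx ht0.le (by linarith) (by ring)
  have hwx : R (constAct S ((t:ℝ) • a + (1-(t:ℝ)) • x)) (constAct S x) := by
    have h := (h3 (constAct S a) (constAct S x) (constAct_isAct X ha) (constAct_isAct X hx)
      x hx (t:ℝ) ht0 ht1).mp hax
    rwa [mix_const, mix_self] at h
  have hptw : ∀ s, R (constAct S ((t:ℝ) • a + (1-(t:ℝ)) • f s)) (constAct S x) := by
    intro s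
    have hne : ¬ R (constAct S ((t:ℝ) • a + (1-(t:ℝ)) • x))
        (constAct S ((t:ℝ) • a + (1-(t:ℝ)) • f s)) := by
      intro hcon
      refine hpt s ((h3 (constAct S x) (constAct S (f s)) (constAct_isAct X hx)
        (constAct_isAct X (hf.1 s)) a ha (1-(t:ℝ)) (by linarith) (by linarith)).mpr ?_)
      rw [mix_const_flip, mix_const_flip]; exact hcon
    by_contra hn
    exact (h1.2.2.2 ((t:ℝ)•a+(1-(t:ℝ))•x) hwX ((t:ℝ)•a+(1-(t:ℝ))•f s)
      (hX ha (hf.1 s) ht0.le (by linarith) (by ring)) x hx hne hn) hwx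
  have hftx : R (mixAct ((t:ℝ)) (constAct S a) f) (constAct S x) :=
    h5 _ _ (mixAct_isAct hX (constAct_isAct X ha) hf ht0.le ht1.le)
      (constAct_isAct X hx) (fun s => hptw s)
  exact (h1.1 _ _ (constAct_isAct X hx)
    (mixAct_isAct hX (constAct_isAct X ha) hf ht0.le ht1.le) htm') hftx

lemma M2core (hX : Convex ℝ X) (h1 : PrefAx1 X R) (h2 : PrefAx2 X R) (h3 : PrefAx3 X R)
    (h5 : PrefAx5 X R) {f : S → V} (hf : IsAct X f) {x b : V} (hx : x ∈ X) (hb : b ∈ X)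
    (hxb : R (constAct S x) (constAct S b))
    (hpt : ∀ s, ¬ R (constAct S (f s)) (constAct S x)) :
    ¬ R f (constAct S x) := by
  intro hfx
  have hopen := (h2 (constAct S b) f (constAct S x) (constAct_isAct X hb) hf
    (constAct_isAct X hx)).1
  have h0mem : (⟨0, by norm_num⟩ : Set.Icc (0:ℝ) 1) ∈
      {α : Set.Icc (0:ℝ) 1 | R (mixAct (α:ℝ) (constAct S b) f) (constAct S x)} := by
    show R (mixAct ((0:ℝ)) (constAct S b) f) (constAct S x)
    rw [mix_zero]; exact hfx
  obtain ⟨t, ht0, ht1, htm⟩ := exists_small hopen h0mem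
  have htm' : R (mixAct ((t:ℝ)) (constAct S b) f) (constAct S x) := htm
  have hwX : (t:ℝ) • b + (1-(t:ℝ)) • x ∈ X := hX hb hx ht0.le (by linarith) (by ring)
  have hxw : R (constAct S x) (constAct S ((t:ℝ) • b + (1-(t:ℝ)) • x)) := by
    have h := (h3 (constAct S x) (constAct S b) (constAct_isAct X hx) (constAct_isAct X hb)
      x hx (t:ℝ) ht0 ht1).mp hxb
    rwa [mix_self, mix_const] at h
  have hptw : ∀ s, R (constAct S x) (constAct S ((t:ℝ) • b + (1-(t:ℝ)) • f s)) := by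
    intro s
    have hne : ¬ R (constAct S ((t:ℝ) • b + (1-(t:ℝ)) • f s))
        (constAct S ((t:ℝ) • b + (1-(t:ℝ)) • x)) := by
      intro hcon
      refine hpt s ((h3 (constAct S (f s)) (constAct S x) (constAct_isAct X (hf.1 s))
        (constAct_isAct X hx) b hb (1-(t:ℝ)) (by linarith) (by linarith)).mpr ?_)
      rw [mix_const_flip, mix_const_flip]; exact hcon
    by_contra hn
    exact (h1.2.2.2 x hx ((t:ℝ)•b+(1-(t:ℝ))•f s)
      (hX hb (hf.1 s) ht0.le (by linarith) (by ring))
      ((t:ℝ)•b+(1-(t:ℝ))•x) hwX hn hne) hxw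
  have hxft : R (constAct S x) (mixAct ((t:ℝ)) (constAct S b) f) :=
    h5 _ _ (constAct_isAct X hx)
      (mixAct_isAct hX (constAct_isAct X hb) hf ht0.le ht1.le) (fun s => hptw s)
  exact (h1.1 _ _ (mixAct_isAct hX (constAct_isAct X hb) hf ht0.le ht1.le)
    (constAct_isAct X hx) htm') hxft

lemma M1lem (hX : Convex ℝ X) (h1 : PrefAx1 X R) (h2 : PrefAx2 X R) (h3 : PrefAx3 X R)
    (h5 : PrefAx5 X R) {f : S → V} (hf : IsAct X f) {x : V} (hx : x ∈ X)
    (hpt : ∀ s, ¬ R (constAct S x) (constAct S (f s))) :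
    ¬ R (constAct S x) f := by
  by_cases hc : ∃ a ∈ X, R (constAct S a) (constAct S x)
  · obtain ⟨a, ha, hax⟩ := hc
    exact M1core hX h1 h2 h3 h5 hf hx ha hax hpt
  · push_neg at hc
    intro hxf
    obtain ⟨a', ha', b', hb', hab⟩ := h1.2.2.1
    have hxb : R (constAct S x) (constAct S b') := by
      by_contra hn
      exact (h1.2.2.2 a' ha' x hx b' hb' (hc a' ha') hn) hab
    have hveq : (1/2:ℝ)•b' + (1-(1/2:ℝ))•x = (1/2:ℝ)•x + (1-(1/2:ℝ))•b' := by
      rw [show (1-(1/2:ℝ)) = (1/2:ℝ) by norm_num]; exact add_comm _ _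
    have hvX : (1/2:ℝ)•x + (1-(1/2:ℝ))•b' ∈ X := hX hx hb' (by norm_num) (by norm_num) (by ring)
    have hred : R (constAct S ((1/2:ℝ)•x + (1-(1/2:ℝ))•b'))
        (mixAct (1/2:ℝ) f (constAct S b')) := by
      have h := (h3 (constAct S x) f (constAct_isAct X hx) hf b' hb' (1/2)
        (by norm_num) (by norm_num)).mp hxf
      rwa [mix_const] at h
    have hxv : R (constAct S x) (constAct S ((1/2:ℝ)•x + (1-(1/2:ℝ))•b')) := by
      have h := (h3 (constAct S x) (constAct S b') (constAct_isAct X hx)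
        (constAct_isAct X hb') x hx (1/2) (by norm_num) (by norm_num)).mp hxb
      rw [mix_self, mix_const, hveq] at h
      exact h
    have hptv : ∀ s, ¬ R (constAct S ((1/2:ℝ)•x + (1-(1/2:ℝ))•b'))
        (constAct S ((mixAct (1/2:ℝ) f (constAct S b')) s)) := by
      intro s hcon
      refine hpt s ((h3 (constAct S x) (constAct S (f s)) (constAct_isAct X hx)
        (constAct_isAct X (hf.1 s)) b' hb' (1/2) (by norm_num) (by norm_num)).mpr ?_)
      rw [mix_const, mix_const]
      exact hcon
    exact (M1core hX h1 h2 h3 h5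
      (mixAct_isAct hX hf (constAct_isAct X hb') (by norm_num) (by norm_num))
      hvX hx hxv hptv) hred

lemma M2lem (hX : Convex ℝ X) (h1 : PrefAx1 X R) (h2 : PrefAx2 X R) (h3 : PrefAx3 X R)
    (h5 : PrefAx5 X R) {f : S → V} (hf : IsAct X f) {x : V} (hx : x ∈ X)
    (hpt : ∀ s, ¬ R (constAct S (f s)) (constAct S x)) :
    ¬ R f (constAct S x) := by
  by_cases hc : ∃ b ∈ X, R (constAct S x) (constAct S b)
  · obtain ⟨b, hb, hxb⟩ := hc
    exact M2core hX h1 h2 h3 h5 hf hx hb hxb hpt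
  · push_neg at hc
    intro hfx
    obtain ⟨a', ha', b', hb', hab⟩ := h1.2.2.1
    have hax : R (constAct S a') (constAct S x) := by
      by_contra hn
      exact (h1.2.2.2 a' ha' x hx b' hb' hn (hc b' hb')) hab
    have hveq : (1/2:ℝ)•a' + (1-(1/2:ℝ))•x = (1/2:ℝ)•x + (1-(1/2:ℝ))•a' := by
      rw [show (1-(1/2:ℝ)) = (1/2:ℝ) by norm_num]; exact add_comm _ _
    have hvX : (1/2:ℝ)•x + (1-(1/2:ℝ))•a' ∈ X := hX hx ha' (by norm_num) (by norm_num) (by ring)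
    have hred : R (mixAct (1/2:ℝ) f (constAct S a'))
        (constAct S ((1/2:ℝ)•x + (1-(1/2:ℝ))•a')) := by
      have h := (h3 f (constAct S x) hf (constAct_isAct X hx) a' ha' (1/2)
        (by norm_num) (by norm_num)).mp hfx
      rwa [mix_const] at h
    have hvx : R (constAct S ((1/2:ℝ)•x + (1-(1/2:ℝ))•a')) (constAct S x) := by
      have h := (h3 (constAct S a') (constAct S x) (constAct_isAct X ha')
        (constAct_isAct X hx) x hx (1/2) (by norm_num) (by norm_num)).mp hax
      rw [mix_self, mix_const, hveq] at h
      exact h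
    have hptv : ∀ s, ¬ R (constAct S ((mixAct (1/2:ℝ) f (constAct S a')) s))
        (constAct S ((1/2:ℝ)•x + (1-(1/2:ℝ))•a')) := by
      intro s hcon
      refine hpt s ((h3 (constAct S (f s)) (constAct S x) (constAct_isAct X (hf.1 s))
        (constAct_isAct X hx) a' ha' (1/2) (by norm_num) (by norm_num)).mpr ?_)
      rw [mix_const, mix_const]
      exact hcon
    exact (M2core hX h1 h2 h3 h5
      (mixAct_isAct hX hf (constAct_isAct X ha') (by norm_num) (by norm_num))
      hvX hx hvx hptv) hred

end Key

section Key2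

variable {S : Type*} [MeasurableSpace S] {V : Type*} [AddCommGroup V] [Module ℝ V]
variable {X : Set V} {R : (S → V) → (S → V) → Prop}

lemma lemP (hX : Convex ℝ X) (h1 : PrefAx1 X R) (h2 : PrefAx2 X R) (h3 : PrefAx3 X R)
    (h5 : PrefAx5 X R) {f : S → V} (hf : IsAct X f) {x y : V} (hx : x ∈ X) (hy : y ∈ X)
    (hfx : R f (constAct S x)) (hyx : ¬ R (constAct S y) (constAct S x)) :
    R f (constAct S y) := by
  by_cases hc : ∃ c ∈ X, R (constAct S c) (constAct S x)
  · obtain ⟨c, hcX, hcx⟩ := hc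
    have hopen := (h2 (constAct S c) (constAct S x) f (constAct_isAct X hcX)
      (constAct_isAct X hx) hf).2
    have h0mem : (⟨0, by norm_num⟩ : Set.Icc (0:ℝ) 1) ∈
        {α : Set.Icc (0:ℝ) 1 | R f (mixAct (α:ℝ) (constAct S c) (constAct S x))} := by
      show R f (mixAct ((0:ℝ)) (constAct S c) (constAct S x))
      rw [mix_zero]; exact hfx
    obtain ⟨t, ht0, ht1, htm⟩ := exists_small hopen h0mem
    have htm' : R f (mixAct ((t:ℝ)) (constAct S c) (constAct S x)) := htm
    rw [mix_const] at htm'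
    have hwX : (t:ℝ)•c+(1-(t:ℝ))•x ∈ X := hX hcX hx ht0.le (by linarith) (by ring)
    have hwx : R (constAct S ((t:ℝ)•c+(1-(t:ℝ))•x)) (constAct S x) := by
      have h := (h3 (constAct S c) (constAct S x) (constAct_isAct X hcX)
        (constAct_isAct X hx) x hx (t:ℝ) ht0 ht1).mp hcx
      rwa [mix_const, mix_self] at h
    have hwy : R (constAct S ((t:ℝ)•c+(1-(t:ℝ))•x)) (constAct S y) := by
      by_contra hn
      exact (h1.2.2.2 _ hwX y hy x hx hn hyx) hwx
    exact h1.2.1 f _ _ hf (constAct_isAct X hwX) (constAct_isAct X hy) htm' hwy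
  · push_neg at hc
    exact absurd hfx (M2lem hX h1 h2 h3 h5 hf hx (fun s => hc (f s) (hf.1 s)))

lemma lemO (hX : Convex ℝ X) (h1 : PrefAx1 X R) (h2 : PrefAx2 X R) (h3 : PrefAx3 X R)
    (h5 : PrefAx5 X R) {f : S → V} (hf : IsAct X f) {x y : V} (hx : x ∈ X) (hy : y ∈ X)
    (hxf : R (constAct S x) f) (hxy : ¬ R (constAct S x) (constAct S y)) :
    R (constAct S y) f := by
  by_cases hc : ∃ c ∈ X, R (constAct S x) (constAct S c)
  · obtain ⟨c, hcX, hxc⟩ := hc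
    have hopen := (h2 (constAct S c) (constAct S x) f (constAct_isAct X hcX)
      (constAct_isAct X hx) hf).1
    have h0mem : (⟨0, by norm_num⟩ : Set.Icc (0:ℝ) 1) ∈
        {α : Set.Icc (0:ℝ) 1 | R (mixAct (α:ℝ) (constAct S c) (constAct S x)) f} := by
      show R (mixAct ((0:ℝ)) (constAct S c) (constAct S x)) f
      rw [mix_zero]; exact hxf
    obtain ⟨t, ht0, ht1, htm⟩ := exists_small hopen h0mem
    have htm' : R (mixAct ((t:ℝ)) (constAct S c) (constAct S x)) f := htm
    rw [mix_const] at htm'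
    have hwX : (t:ℝ)•c+(1-(t:ℝ))•x ∈ X := hX hcX hx ht0.le (by linarith) (by ring)
    have hxw : R (constAct S x) (constAct S ((t:ℝ)•c+(1-(t:ℝ))•x)) := by
      have h := (h3 (constAct S x) (constAct S c) (constAct_isAct X hx)
        (constAct_isAct X hcX) x hx (t:ℝ) ht0 ht1).mp hxc
      rwa [mix_self, mix_const] at h
    have hyw : R (constAct S y) (constAct S ((t:ℝ)•c+(1-(t:ℝ))•x)) := by
      by_contra hn
      exact (h1.2.2.2 x hx y hy _ hwX hxy hn) hxw
    exact h1.2.1 (constAct S y) _ f (constAct_isAct X hy) (constAct_isAct X hwX) hf hyw htm'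
  · push_neg at hc
    exact absurd hxf (M1lem hX h1 h2 h3 h5 hf hx (fun s => hc (f s) (hf.1 s)))

lemma crossLem (hX : Convex ℝ X) (h1 : PrefAx1 X R) (h2 : PrefAx2 X R) {g : S → V}
    (hg : IsAct X g) {x z : V} (hx : x ∈ X) (hz : z ∈ X)
    (hxg : R (constAct S x) g) (hgz : R g (constAct S z)) :
    ∃ w ∈ X, ¬ R (constAct S w) g ∧ ¬ R g (constAct S w) := by
  by_contra hcon
  push_neg at hcon
  have hA := (h2 (constAct S x) (constAct S z) g (constAct_isAct X hx)
    (constAct_isAct X hz) hg).1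
  have hB := (h2 (constAct S x) (constAct S z) g (constAct_isAct X hx)
    (constAct_isAct X hz) hg).2
  rw [isOpen_induced_iff] at hA hB
  obtain ⟨VA, hVA, hVAeq⟩ := hA
  obtain ⟨VB, hVB, hVBeq⟩ := hB
  have hmemA : ∀ (t : Set.Icc (0:ℝ) 1),
      R (mixAct (t:ℝ) (constAct S x) (constAct S z)) g ↔ (t:ℝ) ∈ VA := by
    intro t
    constructor
    · intro h
      have h' : t ∈ Subtype.val ⁻¹' VA := by rw [hVAeq]; exact h
      exact h'
    · intro h
      have h' : t ∈ Subtype.val ⁻¹' VA := h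
      rw [hVAeq] at h'
      exact h'
  have hmemB : ∀ (t : Set.Icc (0:ℝ) 1),
      R g (mixAct (t:ℝ) (constAct S x) (constAct S z)) ↔ (t:ℝ) ∈ VB := by
    intro t
    constructor
    · intro h
      have h' : t ∈ Subtype.val ⁻¹' VB := by rw [hVBeq]; exact h
      exact h'
    · intro h
      have h' : t ∈ Subtype.val ⁻¹' VB := h
      rw [hVBeq] at h'
      exact h'
  have hcov : Set.Icc (0:ℝ) 1 ⊆ VA ∪ VB := by
    intro t ht
    have hwX : t•x+(1-t)•z ∈ X := hX hx hz ht.1 (by linarith [ht.2]) (by ring)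
    rcases em (R (constAct S (t•x+(1-t)•z)) g) with hR | hR
    · left
      refine (hmemA ⟨t, ht⟩).1 ?_
      rw [mix_const]
      exact hR
    · right
      refine (hmemB ⟨t, ht⟩).1 ?_
      rw [mix_const]
      exact hcon _ hwX hR
  have h1A : ((Set.Icc (0:ℝ) 1) ∩ VA).Nonempty := by
    refine ⟨1, ⟨by norm_num, by norm_num⟩, ?_⟩
    refine (hmemA ⟨1, by norm_num⟩).1 ?_
    have e1 : R (mixAct ((1:ℝ)) (constAct S x) (constAct S z)) g := by
      rw [mix_one]; exact hxg
    exact e1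
  have h0B : ((Set.Icc (0:ℝ) 1) ∩ VB).Nonempty := by
    refine ⟨0, ⟨by norm_num, by norm_num⟩, ?_⟩
    refine (hmemB ⟨0, by norm_num⟩).1 ?_
    have e0 : R g (mixAct ((0:ℝ)) (constAct S x) (constAct S z)) := by
      rw [mix_zero]; exact hgz
    exact e0
  obtain ⟨t, htI, htA, htB⟩ := isPreconnected_Icc VA VB hVA hVB hcov h1A h0B
  have hRA : R (mixAct t (constAct S x) (constAct S z)) g := (hmemA ⟨t, htI⟩).2 htA
  have hRB : R g (mixAct t (constAct S x) (constAct S z)) := (hmemB ⟨t, htI⟩).2 htB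
  exact (h1.1 _ _ (mixAct_isAct hX (constAct_isAct X hx) (constAct_isAct X hz)
    htI.1 htI.2) hg hRA) hRB

lemma exists_worst [Nonempty S] (h1 : PrefAx1 X R) {g : S → V} (hg : IsAct X g) :
    ∃ z ∈ X, ∀ s, ¬ R (constAct S z) (constAct S (g s)) := by
  classical
  have hXmem : ∀ w ∈ hg.2.1.toFinset, w ∈ X := by
    intro w hw
    rw [Set.Finite.mem_toFinset] at hw
    obtain ⟨s, rfl⟩ := hw
    exact hg.1 s
  have hne : (hg.2.1.toFinset).Nonempty := by
    rw [Set.Finite.toFinset_nonempty]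
    exact Set.range_nonempty g
  obtain ⟨z, hz, hmin⟩ := finset_min (fun u v => R (constAct S u) (constAct S v))
    hg.2.1.toFinset
    (fun a ha b hb c hc hab hbc => h1.2.1 _ _ _ (constAct_isAct X (hXmem a ha))
      (constAct_isAct X (hXmem b hb)) (constAct_isAct X (hXmem c hc)) hab hbc)
    (fun a ha hr => (h1.1 _ _ (constAct_isAct X (hXmem a ha))
      (constAct_isAct X (hXmem a ha)) hr) hr)
    hne
  refine ⟨z, hXmem z hz, fun s => hmin (g s) ?_⟩
  rw [Set.Finite.mem_toFinset]
  exact ⟨s, rfl⟩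

lemma exists_best [Nonempty S] (h1 : PrefAx1 X R) {g : S → V} (hg : IsAct X g) :
    ∃ z ∈ X, ∀ s, ¬ R (constAct S (g s)) (constAct S z) := by
  classical
  have hXmem : ∀ w ∈ hg.2.1.toFinset, w ∈ X := by
    intro w hw
    rw [Set.Finite.mem_toFinset] at hw
    obtain ⟨s, rfl⟩ := hw
    exact hg.1 s
  have hne : (hg.2.1.toFinset).Nonempty := by
    rw [Set.Finite.toFinset_nonempty]
    exact Set.range_nonempty g
  obtain ⟨z, hz, hmin⟩ := finset_min (fun u v => R (constAct S v) (constAct S u))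
    hg.2.1.toFinset
    (fun a ha b hb c hc hab hbc => h1.2.1 _ _ _ (constAct_isAct X (hXmem c hc))
      (constAct_isAct X (hXmem b hb)) (constAct_isAct X (hXmem a ha)) hbc hab)
    (fun a ha hr => (h1.1 _ _ (constAct_isAct X (hXmem a ha))
      (constAct_isAct X (hXmem a ha)) hr) hr)
    hne
  refine ⟨z, hXmem z hz, fun s => hmin (g s) ?_⟩
  rw [Set.Finite.mem_toFinset]
  exact ⟨s, rfl⟩

end Key2

/-- Step 1: under Axioms 1–7, the derived relations `≻_p`
and `≻_o` are asymmetric and negatively transitive on acts. -/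
theorem statement15 (X : Set V) (hX : Convex ℝ X) (hX2 : ∃ x ∈ X, ∃ y ∈ X, x ≠ y)
    (R : (S → V) → (S → V) → Prop)
    (hax : PrefAx1 X R ∧ PrefAx2 X R ∧ PrefAx3 X R ∧ PrefAx4 X R ∧ PrefAx5 X R ∧
      PrefAx6 X R ∧ PrefAx7 X R) :
    ((∀ f g, IsAct X f → IsAct X g → PessRel X R f g → ¬ PessRel X R g f) ∧
      (∀ f g h, IsAct X f → IsAct X g → IsAct X h →
        ¬ PessRel X R f g → ¬ PessRel X R g h → ¬ PessRel X R f h)) ∧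
    ((∀ f g, IsAct X f → IsAct X g → OptRel X R f g → ¬ OptRel X R g f) ∧
      (∀ f g h, IsAct X f → IsAct X g → IsAct X h →
        ¬ OptRel X R f g → ¬ OptRel X R g h → ¬ OptRel X R f h)) := by
  obtain ⟨h1, h2, h3, _h4, h5, _h6, _h7⟩ := hax
  constructor
  · constructor
    · -- Pess asymmetry
      intro f g hf hg hPfg hPgf
      obtain ⟨x, hxX, hfx, hxg⟩ := hPfg
      obtain ⟨y, hyX, hgy, hyf⟩ := hPgf
      by_cases hyx : R (constAct S y) (constAct S x)
      · exact hxg.2 (h1.2.1 g (constAct S y) (constAct S x) hg (constAct_isAct X hyX)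
          (constAct_isAct X hxX) hgy hyx)
      · exact hyf.2 (lemP hX h1 h2 h3 h5 hf hxX hyX hfx hyx)
    · -- Pess negative transitivity
      intro f g h hf hg hh hfg hgh hPfh
      obtain ⟨x, hxX, hfx, hxh⟩ := hPfh
      have hxgcomp : R (constAct S x) g ∨ R g (constAct S x) := by
        by_contra hn
        push_neg at hn
        exact hfg ⟨x, hxX, hfx, hn.1, hn.2⟩
      rcases hxgcomp with hxg | hgx
      · obtain ⟨z, hzX, hzpt⟩ := exists_worst h1 hg
        have hzg : ¬ R (constAct S z) g := M1lem hX h1 h2 h3 h5 hg hzX hzpt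
        by_cases hgz : R g (constAct S z)
        · obtain ⟨w, hwX, hwg, hgw⟩ := crossLem hX h1 h2 hg hxX hzX hxg hgz
          have hwx : ¬ R (constAct S w) (constAct S x) := by
            intro hwx
            exact hwg (h1.2.1 (constAct S w) (constAct S x) g (constAct_isAct X hwX)
              (constAct_isAct X hxX) hg hwx hxg)
          exact hfg ⟨w, hwX, lemP hX h1 h2 h3 h5 hf hxX hwX hfx hwx, hwg, hgw⟩
        · have hzx : ¬ R (constAct S z) (constAct S x) := by
            intro hzx
            exact hzg (h1.2.1 (constAct S z) (constAct S x) g (constAct_isAct X hzX)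
              (constAct_isAct X hxX) hg hzx hxg)
          exact hfg ⟨z, hzX, lemP hX h1 h2 h3 h5 hf hxX hzX hfx hzx, hzg, hgz⟩
      · exact hgh ⟨x, hxX, hgx, hxh⟩
  · constructor
    · -- Opt asymmetry
      intro f g hf hg hOfg hOgf
      obtain ⟨x, hxX, hxf, hxg⟩ := hOfg
      obtain ⟨y, hyX, hyg, hyf⟩ := hOgf
      by_cases hxy : R (constAct S x) (constAct S y)
      · exact hxf.1 (h1.2.1 (constAct S x) (constAct S y) f (constAct_isAct X hxX)
          (constAct_isAct X hyX) hf hxy hyf)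
      · exact hyg.1 (lemO hX h1 h2 h3 h5 hg hxX hyX hxg hxy)
    · -- Opt negative transitivity
      intro f g h hf hg hh hfg hgh hOfh
      obtain ⟨x, hxX, hxf, hxh⟩ := hOfh
      have hnxg : ¬ R (constAct S x) g := fun hxg => hfg ⟨x, hxX, hxf, hxg⟩
      by_cases hgx : R g (constAct S x)
      · obtain ⟨z, hzX, hzpt⟩ := exists_best h1 hg
        have hgz : ¬ R g (constAct S z) := M2lem hX h1 h2 h3 h5 hg hzX hzpt
        by_cases hzg : R (constAct S z) g
        · obtain ⟨w, hwX, hwg, hgw⟩ := crossLem hX h1 h2 hg hzX hxX hzg hgx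
          have hxw : ¬ R (constAct S x) (constAct S w) := by
            intro hxw
            exact hgw (h1.2.1 g (constAct S x) (constAct S w) hg (constAct_isAct X hxX)
              (constAct_isAct X hwX) hgx hxw)
          exact hgh ⟨w, hwX, ⟨hwg, hgw⟩, lemO hX h1 h2 h3 h5 hh hxX hwX hxh hxw⟩
        · have hxz : ¬ R (constAct S x) (constAct S z) := by
            intro hxz
            exact hgz (h1.2.1 g (constAct S x) (constAct S z) hg (constAct_isAct X hxX)
              (constAct_isAct X hzX) hgx hxz)
          exact hgh ⟨z, hzX, ⟨hzg, hgz⟩, lemO hX h1 h2 h3 h5 hh hxX hzX hxh hxz⟩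
      · exact hgh ⟨x, hxX, ⟨hnxg, hgx⟩, hxh⟩


end Statement
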